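/- Let k be a field, Π a presentation on a set E over k, and X ⊆ E. Then both Π↾X = (V↾X, W.X) and Π.X = (V.X, W↾X) are presentations on X over k. -/

import Mathlib

open Function Set

noncomputable section

variable {α k : Type*} [Field k]

/-- Axiom (O2) for a pair of families of subsets of the ground set `E`. -/
def AxO2 (E : Set α) (𝒞 𝒟 : Set (Set α)) : Prop :=
  ∀ P Q : Set α, ∀ e : α, Disjoint P Q → e ∉ P → e ∉ Q → P ∪ Q ∪ {e} = E →
    (∃ C ∈ 𝒞, e ∈ C ∧ C ⊆ P ∪ {e}) ∨ (∃ D ∈ 𝒟, e ∈ D ∧ D ⊆ Q ∪ {e})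

/-- Two vectors are orthogonal: supports intersect finitely and the sum of products is zero. -/
def Orthog (v w : α → k) : Prop :=
  (support v ∩ support w).Finite ∧ ∑ᶠ e, v e * w e = 0

/-- The subspace of `k^α` of functions supported in `E` (the formal meaning of `k^E`). -/
def FunOn (E : Set α) : Submodule k (α → k) where
  carrier := {v | support v ⊆ E}
  add_mem' hf hg := (support_add _ _).trans (union_subset hf hg)
  zero_mem' := by simp
  smul_mem' c f hf := (support_const_smul_subset c f).trans hf

/-- The set `S(V)` of supports of elements of `V`. -/
def suppSet (V : Submodule k (α → k)) : Set (Set α) := support '' (V : Set (α → k))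

/-- A presentation on the ground set `E` over `k`: a pair of orthogonal subspaces of `k^E`
whose families of supports satisfy (O2). -/
def IsPresentationOn (E : Set α) (V W : Submodule k (α → k)) : Prop :=
  V ≤ FunOn E ∧ W ≤ FunOn E ∧ (∀ v ∈ V, ∀ w ∈ W, Orthog v w) ∧
    AxO2 E (suppSet V) (suppSet W)

/-- Minimal nonempty elements of a family of sets. -/
def MinNE (𝒜 : Set (Set α)) (o : Set α) : Prop :=
  o ∈ 𝒜 ∧ o.Nonempty ∧ ∀ o' ∈ 𝒜, o'.Nonempty → o' ⊆ o → o' = o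

/-- A circuit of a matroid: a minimal dependent set. -/
def MatCircuit (M : Matroid α) (C : Set α) : Prop := Minimal M.Dep C

/-- The pair `(V, W)` presents the matroid `M` on ground set `E`. -/
def Presents (E : Set α) (V W : Submodule k (α → k)) (M : Matroid α) : Prop :=
  M.E = E ∧ (∀ C, MatCircuit M C ↔ MinNE (suppSet V) C) ∧
    (∀ D, MatCircuit M✶ D ↔ MinNE (suppSet W) D)

/-- Restriction of a vector to `X`, as a linear endomap of `k^α` (zeroing outside `X`). -/
def indLM (X : Set α) : (α → k) →ₗ[k] (α → k) where
  toFun v := X.indicator v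
  map_add' f g := by
    funext a
    by_cases h : a ∈ X <;> simp [Set.indicator_of_mem, Set.indicator_of_notMem, h]
  map_smul' c f := by
    funext a
    by_cases h : a ∈ X <;> simp [Set.indicator_of_mem, Set.indicator_of_notMem, h]

/-- Contraction `V.X` of a subspace to `X`. -/
def conV (V : Submodule k (α → k)) (X : Set α) : Submodule k (α → k) :=
  Submodule.map (indLM X) V

/-- Restriction of a pair `(V,W)` to the ground set `X`: `(V↾X, W.X)`. -/
def pairRes (Pr : Submodule k (α → k) × Submodule k (α → k)) (X : Set α) :
    Submodule k (α → k) × Submodule k (α → k) :=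
  (Pr.1 ⊓ FunOn X, conV Pr.2 X)

/-- Contraction of a pair `(V,W)` to the ground set `X`: `(V.X, W↾X)`. -/
def pairCon (Pr : Submodule k (α → k) × Submodule k (α → k)) (X : Set α) :
    Submodule k (α → k) × Submodule k (α → k) :=
  (conV Pr.1 X, Pr.2 ⊓ FunOn X)

/-- A set `I` is `Π`-independent (w.r.t. the vector subspace `V`): it includes no
nonempty support of a vector. -/
def PresIndep (V : Submodule k (α → k)) (I : Set α) : Prop :=
  ∀ v ∈ V, support v ⊆ I → v = 0

end

section Aux

open Function Set

variable {α k : Type*} [Field k]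

theorem mem_funOn {X : Set α} {v : α → k} : v ∈ FunOn (k := k) X ↔ support v ⊆ X := Iff.rfl

theorem aux_orthog_symm {v w : α → k} (h : Orthog v w) : Orthog w v := by
  obtain ⟨hf, hs⟩ := h
  refine ⟨by rwa [Set.inter_comm], ?_⟩
  simp only [mul_comm]
  exact hs

theorem aux_pres_symm {E : Set α} {V W : Submodule k (α → k)}
    (h : IsPresentationOn E V W) : IsPresentationOn E W V := by
  obtain ⟨h1, h2, h3, h4⟩ := h
  refine ⟨h2, h1, fun w hw v hv => aux_orthog_symm (h3 v hv w hw), ?_⟩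
  intro P Q e hPQ heP heQ hU
  rcases h4 Q P e hPQ.symm heQ heP (by rw [Set.union_comm Q P]; exact hU) with hc | hc
  · exact Or.inr hc
  · exact Or.inl hc

theorem aux_res_isPresentation (E : Set α) (V W : Submodule k (α → k))
    (h : IsPresentationOn E V W) (X : Set α) (hX : X ⊆ E) :
    IsPresentationOn X (V ⊓ FunOn X) (conV W X) := by
  obtain ⟨hV, hW, horth, hO2⟩ := h
  have hind : ∀ w : α → k, (indLM (k := k) X) w = X.indicator w := fun _ => rfl
  refine ⟨inf_le_right, ?_, ?_, ?_⟩
  · rintro w ⟨w0, hw0, rfl⟩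
    rw [mem_funOn, hind, Set.support_indicator]
    exact Set.inter_subset_left
  · rintro v ⟨hvV, hvX⟩ w ⟨w0, hw0, rfl⟩
    obtain ⟨hfin, hsum⟩ := horth v hvV w0 hw0
    have hvX' : support v ⊆ X := hvX
    constructor
    · refine hfin.subset (Set.inter_subset_inter_right _ ?_)
      rw [hind, Set.support_indicator]
      exact Set.inter_subset_right
    · rw [← hsum]
      apply finsum_congr
      intro e
      by_cases he : e ∈ X
      · rw [hind, Set.indicator_of_mem he]
      · have hv0 : v e = 0 := by
          by_contra h0
          exact he (hvX' h0)
        simp [hv0]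
  · intro P Q e hPQ heP heQ hU
    have heX : e ∈ X := by rw [← hU]; exact Or.inr rfl
    have hPX : P ⊆ X := by rw [← hU]; exact fun a ha => Or.inl (Or.inl ha)
    have hQX : Q ⊆ X := by rw [← hU]; exact fun a ha => Or.inl (Or.inr ha)
    have hdisj : Disjoint P (Q ∪ (E \ X)) :=
      Disjoint.union_right hPQ (Set.disjoint_sdiff_right.mono_left hPX)
    have heQ' : e ∉ Q ∪ (E \ X) := by
      rintro (h1 | h2)
      · exact heQ h1
      · exact h2.2 heX
    have hU' : P ∪ (Q ∪ (E \ X)) ∪ {e} = E := by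
      ext a
      simp only [Set.mem_union, Set.mem_diff, Set.mem_singleton_iff]
      constructor
      · rintro ((hp | hq | ⟨hE, _⟩) | he)
        · exact hX (hPX hp)
        · exact hX (hQX hq)
        · exact hE
        · exact hX (he ▸ heX)
      · intro ha
        by_cases haX : a ∈ X
        · rw [← hU] at haX
          rcases haX with (hp | hq) | he
          · exact Or.inl (Or.inl hp)
          · exact Or.inl (Or.inr (Or.inl hq))
          · exact Or.inr he
        · exact Or.inl (Or.inr (Or.inr ⟨ha, haX⟩))
    rcases hO2 P (Q ∪ (E \ X)) e hdisj heP heQ' hU' with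
      ⟨C, ⟨v, hv, rfl⟩, heC, hCsub⟩ | ⟨D, ⟨w, hw, rfl⟩, heD, hDsub⟩
    · left
      refine ⟨support v, ⟨v, ⟨hv, ?_⟩, rfl⟩, heC, hCsub⟩
      refine hCsub.trans (Set.union_subset hPX ?_)
      rintro a rfl
      exact heX
    · right
      refine ⟨support (X.indicator w), ⟨X.indicator w, ⟨w, hw, hind w⟩, rfl⟩, ?_, ?_⟩
      · rw [Set.support_indicator]
        exact ⟨heX, heD⟩
      · rw [Set.support_indicator]
        rintro a ⟨haX, haD⟩
        rcases hDsub haD with (hq | hE) | he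
        · exact Or.inl hq
        · exact absurd haX hE.2
        · exact Or.inr he

end Aux

theorem minor_isPresentation {α k : Type*} [Field k]
    (E : Set α) (V W : Submodule k (α → k)) (h : IsPresentationOn E V W)
    (X : Set α) (hX : X ⊆ E) :
    IsPresentationOn X (pairRes (V, W) X).1 (pairRes (V, W) X).2 ∧
      IsPresentationOn X (pairCon (V, W) X).1 (pairCon (V, W) X).2 := by
  constructor
  · exact aux_res_isPresentation E V W h X hX
  · exact aux_pres_symm (aux_res_isPresentation E W V (aux_pres_symm h) X hX)
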